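/- For any symmetric hollow matrix D, the (i,j) entry of Δ^T Δ D equals 2(n−1) D_{ij} − Σ_{k≠i} D_{ik} − Σ_{k≠j} D_{jk}. -/

import Mathlib

open Matrix BigOperators Finset

private lemma pair_symm_sum {n : ℕ} (f : Fin n → Fin n → ℝ) :
    ∑ p ∈ Finset.univ.filter (fun p : Fin n × Fin n => p.1 < p.2), (f p.1 p.2 + f p.2 p.1)
      = ∑ p ∈ Finset.univ.filter (fun p : Fin n × Fin n => p.1 ≠ p.2), f p.1 p.2 := by
  have hsplit := Finset.sum_filter_add_sum_filter_not
    (Finset.univ.filter (fun p : Fin n × Fin n => p.1 ≠ p.2)) (fun p => p.1 < p.2)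
    (fun p => f p.1 p.2)
  rw [Finset.filter_filter, Finset.filter_filter] at hsplit
  have e1 : (Finset.univ.filter fun p : Fin n × Fin n => p.1 ≠ p.2 ∧ p.1 < p.2)
      = Finset.univ.filter fun p : Fin n × Fin n => p.1 < p.2 := by
    ext p; simp only [Finset.mem_filter, Finset.mem_univ, true_and]
    exact ⟨fun h => h.2, fun h => ⟨ne_of_lt h, h⟩⟩
  have e2 : (Finset.univ.filter fun p : Fin n × Fin n => p.1 ≠ p.2 ∧ ¬ p.1 < p.2)
      = Finset.univ.filter fun p : Fin n × Fin n => p.2 < p.1 := by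
    ext p; simp only [Finset.mem_filter, Finset.mem_univ, true_and]
    constructor
    · rintro ⟨h1, h2⟩; exact h1.lt_or_gt.resolve_left h2
    · intro h; exact ⟨(ne_of_lt h).symm, not_lt.2 h.le⟩
  rw [e1, e2] at hsplit
  rw [Finset.sum_add_distrib, ← hsplit]
  congr 1
  rw [Finset.sum_filter, Finset.sum_filter]
  exact Fintype.sum_equiv (Equiv.prodComm _ _) _ _ (fun p => by simp [Equiv.prodComm]; exact if_congr Iff.rfl rfl rfl)

private lemma pair_ne_sum {n : ℕ} (f : Fin n → Fin n → ℝ) :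
    ∑ p ∈ Finset.univ.filter (fun p : Fin n × Fin n => p.1 ≠ p.2), f p.1 p.2
      = ∑ i, ∑ j ∈ Finset.univ.filter (· ≠ i), f i j := by
  rw [Finset.sum_filter, Fintype.sum_prod_type]
  refine Finset.sum_congr rfl fun i _ => ?_
  rw [Finset.sum_filter]
  refine Finset.sum_congr rfl fun j _ => ?_
  by_cases h : i = j <;> simp [h, Ne, eq_comm]

/-- The set of all triplets `(i,j,k)` with distinct indices and `j < k`. -/
def tripletSet (n : ℕ) : Finset (Fin n × Fin n × Fin n) :=
  Finset.univ.filter fun t => t.1 ≠ t.2.1 ∧ t.1 ≠ t.2.2 ∧ t.2.1 < t.2.2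

private lemma triple_symm {n : ℕ} (g : Fin n → Fin n → Fin n → ℝ) :
    ∑ t ∈ tripletSet n, (g t.1 t.2.1 t.2.2 + g t.1 t.2.2 t.2.1)
      = ∑ t ∈ Finset.univ.filter
          (fun t : Fin n × Fin n × Fin n => t.1 ≠ t.2.1 ∧ t.1 ≠ t.2.2 ∧ t.2.1 ≠ t.2.2),
          g t.1 t.2.1 t.2.2 := by
  have hsplit := Finset.sum_filter_add_sum_filter_not
    (Finset.univ.filter
      (fun t : Fin n × Fin n × Fin n => t.1 ≠ t.2.1 ∧ t.1 ≠ t.2.2 ∧ t.2.1 ≠ t.2.2))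
    (fun t => t.2.1 < t.2.2) (fun t => g t.1 t.2.1 t.2.2)
  rw [Finset.filter_filter, Finset.filter_filter] at hsplit
  have e1 : (Finset.univ.filter fun t : Fin n × Fin n × Fin n =>
        (t.1 ≠ t.2.1 ∧ t.1 ≠ t.2.2 ∧ t.2.1 ≠ t.2.2) ∧ t.2.1 < t.2.2) = tripletSet n := by
    ext t; simp only [tripletSet, Finset.mem_filter, Finset.mem_univ, true_and]
    exact ⟨fun h => ⟨h.1.1, h.1.2.1, h.2⟩, fun h => ⟨⟨h.1, h.2.1, ne_of_lt h.2.2⟩, h.2.2⟩⟩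
  have e2 : (Finset.univ.filter fun t : Fin n × Fin n × Fin n =>
        (t.1 ≠ t.2.1 ∧ t.1 ≠ t.2.2 ∧ t.2.1 ≠ t.2.2) ∧ ¬ t.2.1 < t.2.2)
      = Finset.univ.filter fun t : Fin n × Fin n × Fin n =>
          t.1 ≠ t.2.1 ∧ t.1 ≠ t.2.2 ∧ t.2.2 < t.2.1 := by
    ext t; simp only [Finset.mem_filter, Finset.mem_univ, true_and]
    constructor
    · rintro ⟨⟨h1, h2, h3⟩, h4⟩; exact ⟨h1, h2, h3.lt_or_gt.resolve_left h4⟩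
    · rintro ⟨h1, h2, h3⟩; exact ⟨⟨h1, h2, (ne_of_lt h3).symm⟩, not_lt.2 h3.le⟩
  rw [e1, e2] at hsplit
  rw [Finset.sum_add_distrib, ← hsplit]
  congr 1
  rw [tripletSet, Finset.sum_filter, Finset.sum_filter]
  exact Fintype.sum_equiv ((Equiv.refl (Fin n)).prodCongr (Equiv.prodComm _ _)) _ _
    (fun t => by
      simp only [Equiv.prodCongr_apply, Equiv.coe_refl, Prod.map, Equiv.prodComm_apply,
        Prod.swap, id, Ne]
      exact (if_congr (by tauto) rfl rfl).symm)

private lemma triple_ne_sum {n : ℕ} (g : Fin n → Fin n → Fin n → ℝ) :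
    ∑ t ∈ Finset.univ.filter
        (fun t : Fin n × Fin n × Fin n => t.1 ≠ t.2.1 ∧ t.1 ≠ t.2.2 ∧ t.2.1 ≠ t.2.2),
        g t.1 t.2.1 t.2.2
      = ∑ i, ∑ j ∈ Finset.univ.filter (· ≠ i),
          ∑ k ∈ Finset.univ.filter (fun k => k ≠ i ∧ k ≠ j), g i j k := by
  simp only [Finset.sum_filter]
  rw [Fintype.sum_prod_type (f := fun t : Fin n × Fin n × Fin n =>
    if t.1 ≠ t.2.1 ∧ t.1 ≠ t.2.2 ∧ t.2.1 ≠ t.2.2 then g t.1 t.2.1 t.2.2 else 0)]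
  refine Finset.sum_congr rfl fun i _ => ?_
  rw [Fintype.sum_prod_type (f := fun t : Fin n × Fin n =>
    if i ≠ t.1 ∧ i ≠ t.2 ∧ t.1 ≠ t.2 then g i t.1 t.2 else 0)]
  refine Finset.sum_congr rfl fun j _ => ?_
  by_cases hj : j = i
  · subst hj; simp
  · rw [if_pos hj]
    refine Finset.sum_congr rfl fun k _ => if_congr (by tauto) rfl rfl

/-- The entry formula for `Δᵀ Δ D`: for symmetric hollow matrices `D`, the self-adjoint
operator `Δᵀ Δ` (with respect to the upper-triangular inner product) acts entrywise by
`[ΔᵀΔ D]_{ij} = 2(n-1) D_{ij} - Σ_{k≠i} D_{ik} - Σ_{k≠j} D_{jk}`, i.e. for every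
symmetric hollow `E`, `⟨Δ(D), Δ(E)⟩ = Σ_{i<j} [ΔᵀΔ D]_{ij} E_{ij}`. -/
theorem deltaT_delta_entry (n : ℕ)
    (D E : Matrix (Fin n) (Fin n) ℝ)
    (hDsym : Dᵀ = D) (hDhollow : ∀ i, D i i = 0)
    (hEsym : Eᵀ = E) (hEhollow : ∀ i, E i i = 0) :
    ∑ t ∈ tripletSet n,
        (D t.1 t.2.1 - D t.1 t.2.2) * (E t.1 t.2.1 - E t.1 t.2.2) =
      ∑ p ∈ (Finset.univ.filter fun p : Fin n × Fin n => p.1 < p.2),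
        (2 * ((n : ℝ) - 1) * D p.1 p.2
          - ∑ k ∈ Finset.univ.filter (· ≠ p.1), D p.1 k
          - ∑ k ∈ Finset.univ.filter (· ≠ p.2), D p.2 k) * E p.1 p.2 := by
  have hD : ∀ i j, D j i = D i j := fun i j => by
    conv_lhs => rw [← hDsym, Matrix.transpose_apply]
  have hE : ∀ i j, E j i = E i j := fun i j => by
    conv_lhs => rw [← hEsym, Matrix.transpose_apply]
  calc
    ∑ t ∈ tripletSet n,
        (D t.1 t.2.1 - D t.1 t.2.2) * (E t.1 t.2.1 - E t.1 t.2.2)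
      = ∑ t ∈ tripletSet n,
          ((D t.1 t.2.1 * E t.1 t.2.1 - D t.1 t.2.1 * E t.1 t.2.2)
            + (D t.1 t.2.2 * E t.1 t.2.2 - D t.1 t.2.2 * E t.1 t.2.1)) :=
        Finset.sum_congr rfl fun t _ => by ring
    _ = ∑ t ∈ Finset.univ.filter
          (fun t : Fin n × Fin n × Fin n => t.1 ≠ t.2.1 ∧ t.1 ≠ t.2.2 ∧ t.2.1 ≠ t.2.2),
          (D t.1 t.2.1 * E t.1 t.2.1 - D t.1 t.2.1 * E t.1 t.2.2) :=
        triple_symm (fun i j k => D i j * E i j - D i j * E i k)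
    _ = ∑ i, ∑ j ∈ Finset.univ.filter (· ≠ i),
          ∑ k ∈ Finset.univ.filter (fun k => k ≠ i ∧ k ≠ j),
            (D i j * E i j - D i j * E i k) :=
        triple_ne_sum (fun i j k => D i j * E i j - D i j * E i k)
    _ = ∑ i, ∑ j ∈ Finset.univ.filter (· ≠ i),
          (((n : ℝ) - 1) * (D i j * E i j)
            - (∑ k ∈ Finset.univ.filter (· ≠ i), E i k) * D i j) := by
        refine Finset.sum_congr rfl fun i _ => Finset.sum_congr rfl fun j hj => ?_
        have hij : j ≠ i := by simpa using hj
        have hn2 : 2 ≤ n := by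
          have := Fintype.one_lt_card_iff.mpr ⟨j, i, hij⟩
          simp at this; omega
        have hnotmem : j ∉ Finset.univ.filter (fun k => k ≠ i ∧ k ≠ j) := by simp
        have hins : Finset.univ.filter (· ≠ i)
            = insert j (Finset.univ.filter fun k => k ≠ i ∧ k ≠ j) := by
          ext k
          simp only [Finset.mem_filter, Finset.mem_univ, true_and, Finset.mem_insert]
          constructor
          · intro hk
            by_cases h : k = j
            · exact Or.inl h
            · exact Or.inr ⟨hk, h⟩
          · rintro (rfl | ⟨hk, _⟩)
            · exact hij
            · exact hk
        have hsumE : ∑ k ∈ Finset.univ.filter (fun k => k ≠ i ∧ k ≠ j), E i k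
            = (∑ k ∈ Finset.univ.filter (· ≠ i), E i k) - E i j := by
          rw [hins, Finset.sum_insert hnotmem]; ring
        have hcard : (Finset.univ.filter (fun k : Fin n => k ≠ i ∧ k ≠ j)).card = n - 2 := by
          have e : (Finset.univ.filter (· ≠ i) : Finset (Fin n)).card = n - 1 := by
            rw [Finset.filter_ne', Finset.card_erase_of_mem (Finset.mem_univ i),
              Finset.card_univ, Fintype.card_fin]
          rw [hins, Finset.card_insert_of_notMem hnotmem] at e
          omega
        rw [Finset.sum_sub_distrib, Finset.sum_const, ← Finset.mul_sum, hsumE,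
          nsmul_eq_mul, hcard, Nat.cast_sub hn2]
        push_cast
        ring
    _ = ∑ i, ∑ j ∈ Finset.univ.filter (· ≠ i),
          (((n : ℝ) - 1) * (D i j * E i j)
            - (∑ k ∈ Finset.univ.filter (· ≠ i), D i k) * E i j) := by
        refine Finset.sum_congr rfl fun i _ => ?_
        rw [Finset.sum_sub_distrib, Finset.sum_sub_distrib]
        congr 1
        rw [← Finset.mul_sum, ← Finset.mul_sum, mul_comm]
    _ = ∑ p ∈ Finset.univ.filter (fun p : Fin n × Fin n => p.1 ≠ p.2),
          (((n : ℝ) - 1) * (D p.1 p.2 * E p.1 p.2)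
            - (∑ k ∈ Finset.univ.filter (· ≠ p.1), D p.1 k) * E p.1 p.2) :=
        (pair_ne_sum (fun a b => ((n : ℝ) - 1) * (D a b * E a b)
          - (∑ k ∈ Finset.univ.filter (· ≠ a), D a k) * E a b)).symm
    _ = ∑ p ∈ (Finset.univ.filter fun p : Fin n × Fin n => p.1 < p.2),
          ((((n : ℝ) - 1) * (D p.1 p.2 * E p.1 p.2)
              - (∑ k ∈ Finset.univ.filter (· ≠ p.1), D p.1 k) * E p.1 p.2)
            + (((n : ℝ) - 1) * (D p.2 p.1 * E p.2 p.1)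
              - (∑ k ∈ Finset.univ.filter (· ≠ p.2), D p.2 k) * E p.2 p.1)) :=
        (pair_symm_sum (fun a b => ((n : ℝ) - 1) * (D a b * E a b)
          - (∑ k ∈ Finset.univ.filter (· ≠ a), D a k) * E a b)).symm
    _ = ∑ p ∈ (Finset.univ.filter fun p : Fin n × Fin n => p.1 < p.2),
          (2 * ((n : ℝ) - 1) * D p.1 p.2
            - ∑ k ∈ Finset.univ.filter (· ≠ p.1), D p.1 k
            - ∑ k ∈ Finset.univ.filter (· ≠ p.2), D p.2 k) * E p.1 p.2 :=
        Finset.sum_congr rfl fun p _ => by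
          rw [hD p.1 p.2, hE p.1 p.2]
          ring
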